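/- Let S be the unilateral shift on H = ℓ²(ℕ; ℂ), e₀ the standard basis vector at 0, and let V be an isometry on H commuting with S. Then the operator norm of (I − VV*) S* VV* (the implementation on H of the compression P_{(ran V)^⊥} S*|_{ran V}) equals (1 − |⟨V e₀, e₀⟩|²)^{1/2}. -/

import Mathlib

open ContinuousLinearMap

noncomputable section

/-- `ℓ²(ℕ; ℂ)`, identified with the Hardy space `H²(𝔻)` via Taylor coefficients. -/
abbrev H1 : Type := lp (fun _ : ℕ => ℂ) 2

/-- `S` is the unilateral shift: `(S f) 0 = 0` and `(S f) k = f (k-1)` for `k ≥ 1`. -/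
def IsShift1 (S : H1 →L[ℂ] H1) : Prop :=
  ∀ (f : H1) (k : ℕ), S f k = if k = 0 then 0 else f (k - 1)

/-- The standard basis vector at `0` (the constant function `1` in `H²(𝔻)`). -/
def e0 : H1 := lp.single 2 0 1

lemma coord_eq_inner (f : H1) (k : ℕ) :
    f k = (inner ℂ (lp.single 2 k (1:ℂ)) f : ℂ) := by
  rw [lp.inner_single_left]
  simp [RCLike.inner_apply]

lemma shift_single (S : H1 →L[ℂ] H1) (hS : IsShift1 S) (k : ℕ) :
    S (lp.single 2 k (1:ℂ)) = lp.single 2 (k+1) (1:ℂ) := by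
  apply lp.ext; funext j
  rw [hS]
  rcases eq_or_ne j (k+1) with rfl | hj
  · simp [lp.single_apply]
  · rw [lp.single_apply_ne _ _ _ hj]
    split_ifs with h
    · rfl
    · apply lp.single_apply_ne
      omega

lemma adjoint_shift_apply (S : H1 →L[ℂ] H1) (hS : IsShift1 S) (f : H1) (k : ℕ) :
    (adjoint S f) k = f (k+1) := by
  rw [coord_eq_inner, adjoint_inner_right, shift_single S hS, ← coord_eq_inner]

lemma adjS_S (S : H1 →L[ℂ] H1) (hS : IsShift1 S) : adjoint S * S = 1 := by
  ext f : 1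
  apply lp.ext; funext k
  rw [ContinuousLinearMap.mul_apply, adjoint_shift_apply S hS, hS]
  simp

lemma e0_zero : (e0 : H1) 0 = 1 := lp.single_apply_self 2 0 1

lemma e0_succ (j : ℕ) : (e0 : H1) (j+1) = 0 := lp.single_apply_ne 2 0 1 (by omega)

lemma norm_e0 : ‖(e0 : H1)‖ = 1 := by
  have := lp.norm_single (E := fun _ : ℕ => ℂ) (p := 2) (by norm_num) 0 (1:ℂ)
  simpa [e0] using this

lemma S_adjS (S : H1 →L[ℂ] H1) (hS : IsShift1 S) (f : H1) :
    S (adjoint S f) = f - (f 0) • e0 := by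
  apply lp.ext; funext k
  rw [hS]
  rcases k with _ | j
  · rw [lp.coeFn_sub, lp.coeFn_smul, Pi.sub_apply, Pi.smul_apply]; simp [e0_zero]
  · rw [lp.coeFn_sub, lp.coeFn_smul, Pi.sub_apply, Pi.smul_apply]; simp [e0_succ, adjoint_shift_apply S hS]

lemma norm_map_of_isometry (A : H1 →L[ℂ] H1) (hA : adjoint A * A = 1) (f : H1) :
    ‖A f‖ = ‖f‖ := by
  have hAf : adjoint A (A f) = f := by
    have := congrArg (fun T : H1 →L[ℂ] H1 => T f) hA
    simpa [mul_apply] using this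
  have h : (inner ℂ (A f) (A f) : ℂ) = inner ℂ f f := by
    rw [← adjoint_inner_right, hAf]
  rw [inner_self_eq_norm_sq_to_K, inner_self_eq_norm_sq_to_K] at h
  have h2 : ‖A f‖ ^ 2 = ‖f‖ ^ 2 := by exact_mod_cast h
  nlinarith [norm_nonneg (A f), norm_nonneg f]

lemma inner_e0 (f : H1) : (inner ℂ (e0 : H1) f : ℂ) = f 0 := by
  rw [e0, lp.inner_single_left]
  simp [RCLike.inner_apply]

lemma norm_adjS_sq (S : H1 →L[ℂ] H1) (hS : IsShift1 S) (f : H1) :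
    ‖adjoint S f‖ ^ 2 = ‖f‖ ^ 2 - ‖f 0‖ ^ 2 := by
  have h1 : ‖adjoint S f‖ = ‖f - (f 0) • e0‖ := by
    rw [← norm_map_of_isometry S (adjS_S S hS), S_adjS S hS]
  rw [h1, @norm_sub_sq ℂ]
  have h2 : (inner ℂ f ((f 0) • e0) : ℂ) = f 0 * (starRingEnd ℂ) (f 0) := by
    rw [inner_smul_right]
    rw [← inner_conj_symm, inner_e0]
  rw [h2]
  have h3 : ‖(f 0) • (e0 : H1)‖ = ‖f 0‖ := by
    rw [norm_smul, norm_e0, mul_one]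
  rw [h3]
  have h4 : RCLike.re (f 0 * (starRingEnd ℂ) (f 0)) = ‖f 0‖ ^ 2 := by
    rw [Complex.mul_conj]
    simp [Complex.normSq_eq_norm_sq, ← Complex.ofReal_pow]
  rw [h4]; ring

lemma adjV_adjS_V (S V : H1 →L[ℂ] H1) (hV : adjoint V * V = 1) (hVS : V * S = S * V) :
    ∀ f, adjoint V (adjoint S (V f)) = adjoint S f := by
  intro f
  have h1 : adjoint S * adjoint V = adjoint V * adjoint S := by
    have := congrArg (star : (H1 →L[ℂ] H1) → _) hVS
    simpa [star_mul, star_eq_adjoint] using this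
  have h2 : adjoint V * adjoint S * V = adjoint S := by
    rw [← h1, mul_assoc, hV, mul_one]
  have := congrArg (fun T : H1 →L[ℂ] H1 => T f) h2
  simpa [mul_apply] using this

lemma Vf0 (S V : H1 →L[ℂ] H1) (hS : IsShift1 S) (hVS : V * S = S * V) (f : H1) :
    (V f) 0 = (V e0) 0 * f 0 := by
  have hdec : (f 0) • e0 + S (adjoint S f) = f := by
    rw [S_adjS S hS]; abel
  have hcomm : V (S (adjoint S f)) = S (V (adjoint S f)) := by
    have := congrArg (fun T : H1 →L[ℂ] H1 => T (adjoint S f)) hVS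
    simpa [mul_apply] using this
  calc (V f) 0 = (V ((f 0) • e0 + S (adjoint S f))) 0 := by rw [hdec]
    _ = ((f 0) • V e0 + S (V (adjoint S f))) 0 := by rw [map_add, map_smul, hcomm]
    _ = (V e0) 0 * f 0 := by
        rw [lp.coeFn_add, Pi.add_apply, lp.coeFn_smul, Pi.smul_apply, hS]
        simp [smul_eq_mul]; ring

lemma norm_sub_proj (V : H1 →L[ℂ] H1) (hV : adjoint V * V = 1) (u : H1) :
    ‖u - V (adjoint V u)‖ ^ 2 = ‖u‖ ^ 2 - ‖adjoint V u‖ ^ 2 := by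
  rw [@norm_sub_sq ℂ]
  have h1 : (inner ℂ u (V (adjoint V u)) : ℂ) = inner ℂ (adjoint V u) (adjoint V u) :=
    (adjoint_inner_left V (adjoint V u) u).symm
  rw [h1, inner_self_eq_norm_sq, norm_map_of_isometry V hV]
  ring

set_option maxHeartbeats 1000000 in
/-- If `S` is the unilateral shift and `V` is an isometry commuting with
`S` (so `V = M_Θ` for an inner function `Θ` with `Θ(0) = ⟨V e₀, e₀⟩`, i.e. Mathlib's
`⟪e₀, V e₀⟫`), then the norm of `(I − VV*) S* V V*` — the implementation on `H` of the
compression `P_{(ran V)ᗮ} S*|_{ran V}` — equals `(1 − |Θ(0)|²)^{1/2}`. -/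
theorem norm_compression_shift_adjoint
    (S V : H1 →L[ℂ] H1) (hS : IsShift1 S)
    (hV : adjoint V * V = 1) (hVS : V * S = S * V) :
    ‖(1 - V * adjoint V) * adjoint S * (V * adjoint V)‖
      = Real.sqrt (1 - ‖(inner ℂ e0 (V e0) : ℂ)‖ ^ 2) := by
  set θ : ℂ := (V e0) 0 with hθ
  have hinner : (inner ℂ (e0 : H1) (V e0) : ℂ) = θ := inner_e0 (V e0)
  have hVe0 : ‖V e0‖ = 1 := by rw [norm_map_of_isometry V hV, norm_e0]
  have hθle : ‖θ‖ ≤ 1 := by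
    rw [hθ]
    calc ‖(V e0) 0‖ ≤ ‖V e0‖ := lp.norm_apply_le_norm (by norm_num) (V e0) 0
      _ = 1 := hVe0
  have hθ2 : 0 ≤ 1 - ‖θ‖ ^ 2 := by nlinarith [norm_nonneg θ]
  -- key pointwise formula
  have key : ∀ f : H1,
      ‖((1 - V * adjoint V) * adjoint S * (V * adjoint V)) f‖ ^ 2
        = ‖(adjoint V f) 0‖ ^ 2 * (1 - ‖θ‖ ^ 2) := by
    intro f
    set h : H1 := adjoint V f with hh
    set u : H1 := adjoint S (V h) with hu
    have hTf : ((1 - V * adjoint V) * adjoint S * (V * adjoint V)) f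
        = u - V (adjoint V u) := by
      simp [mul_apply, sub_apply, one_apply, hu, hh]
    rw [hTf, norm_sub_proj V hV]
    have hVu : adjoint V u = adjoint S h := adjV_adjS_V S V hV hVS h
    have hVh0 : ‖(V h) 0‖ ^ 2 = ‖θ‖ ^ 2 * ‖h 0‖ ^ 2 := by
      rw [Vf0 S V hS hVS h, norm_mul]; ring
    rw [hVu, norm_adjS_sq S hS, norm_adjS_sq S hS, norm_map_of_isometry V hV, hVh0]
    ring
  rw [hinner]
  apply le_antisymm
  · apply opNorm_le_bound _ (Real.sqrt_nonneg _)
    intro f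
    have hk := key f
    have h1 : ‖(adjoint V f) 0‖ ≤ ‖f‖ := by
      calc ‖(adjoint V f) 0‖ ≤ ‖adjoint V f‖ := lp.norm_apply_le_norm (by norm_num) _ 0
        _ ≤ ‖adjoint V‖ * ‖f‖ := le_opNorm _ _
        _ ≤ 1 * ‖f‖ := by
            apply mul_le_mul_of_nonneg_right _ (norm_nonneg f)
            rw [← star_eq_adjoint, norm_star]
            exact opNorm_le_bound _ zero_le_one fun g => by
              rw [norm_map_of_isometry V hV, one_mul]
        _ = ‖f‖ := one_mul _
    have hsq : ‖(adjoint V f) 0‖ ^ 2 ≤ ‖f‖ ^ 2 := by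
      nlinarith [norm_nonneg ((adjoint V f) 0)]
    have h2 : ‖((1 - V * adjoint V) * adjoint S * (V * adjoint V)) f‖ ^ 2
        ≤ (Real.sqrt (1 - ‖θ‖ ^ 2) * ‖f‖) ^ 2 := by
      rw [mul_pow, Real.sq_sqrt hθ2, hk]
      nlinarith [hsq, hθ2]
    calc ‖((1 - V * adjoint V) * adjoint S * (V * adjoint V)) f‖
        = Real.sqrt (‖((1 - V * adjoint V) * adjoint S * (V * adjoint V)) f‖ ^ 2) :=
          (Real.sqrt_sq (norm_nonneg _)).symm
      _ ≤ Real.sqrt ((Real.sqrt (1 - ‖θ‖ ^ 2) * ‖f‖) ^ 2) := Real.sqrt_le_sqrt h2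
      _ = Real.sqrt (1 - ‖θ‖ ^ 2) * ‖f‖ := Real.sqrt_sq (by positivity)
  · have hVVe0 : adjoint V (V e0) = e0 := by
      have := congrArg (fun T : H1 →L[ℂ] H1 => T e0) hV
      simpa [mul_apply] using this
    have hk := key (V e0)
    rw [hVVe0, e0_zero] at hk
    have hnorm : ‖((1 - V * adjoint V) * adjoint S * (V * adjoint V)) (V e0)‖
        = Real.sqrt (1 - ‖θ‖ ^ 2) := by
      rw [← Real.sqrt_sq (norm_nonneg _), hk]
      simp
    calc Real.sqrt (1 - ‖θ‖ ^ 2)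
        = ‖((1 - V * adjoint V) * adjoint S * (V * adjoint V)) (V e0)‖ := hnorm.symm
      _ ≤ ‖(1 - V * adjoint V) * adjoint S * (V * adjoint V)‖ * ‖V e0‖ := le_opNorm _ _
      _ = ‖(1 - V * adjoint V) * adjoint S * (V * adjoint V)‖ := by rw [hVe0, mul_one]
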